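/- Let I be a set of non-ω-measurable cardinality, J an infinite set, (A_i)_{i∈I}, (B_j)_{j∈J} families of abelian groups with |A_i| < |J| for all i ∈ I, and φ : ∏_{i∈I} A_i → ⊕_{j∈J} B_j a surjective group homomorphism. Suppose given descending chains of subgroups (A_{i,k})_{k∈ℕ} and (B_{j,k})_{k∈ℕ} such that for every k ∈ ℕ the restriction of φ to ∏_{i∈I} A_{i,k} maps onto ⊕_{j∈J} B_{j,k}. Then there exist n₀ ∈ ℕ and an infinite subset L ⊆ J such that B_{j,n} = B_{j,n₀} for all j ∈ L and all n ≥ n₀. -/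

import Mathlib

universe u

/-- A set `I` is `ω`-measurable if it is uncountable and carries a nonprincipal countably
complete ultrafilter. -/
def IsOmegaMeasurable (I : Type*) : Prop :=
  ¬ Countable I ∧ ∃ U : Ultrafilter I, (∀ x : I, ({x} : Set I) ∉ U) ∧
    ∀ s : ℕ → Set I, (∀ n, s n ∈ U) → (⋂ n, s n) ∈ U

attribute [local instance] Classical.propDecidable
set_option linter.unusedSectionVars false

/-- Subsets of `J` of cardinality less than that of `J`. -/
def ChaseSmall (J : Type u) (F : Set J) : Prop := Cardinal.mk F < Cardinal.mk J

section Chase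

variable {I : Type u} {J : Type u} [Infinite J] {A : I → Type u} {B : J → Type u}
  [∀ i, AddCommGroup (A i)] [∀ j, AddCommGroup (B j)]

lemma chaseSmall_of_finite {F : Set J} (h : F.Finite) : ChaseSmall J F :=
  lt_of_lt_of_le h.lt_aleph0 (Cardinal.infinite_iff.mp ‹Infinite J›)

lemma chaseSmall_union {F F' : Set J} (h : ChaseSmall J F) (h' : ChaseSmall J F') :
    ChaseSmall J (F ∪ F') :=
  lt_of_le_of_lt (Cardinal.mk_union_le F F')
    (Cardinal.add_lt_of_lt (Cardinal.infinite_iff.mp ‹Infinite J›) h h')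

lemma chaseSmall_exists_not_mem {F : Set J} (h : ChaseSmall J F) : ∃ j, j ∉ F := by
  by_contra hc
  push_neg at hc
  have hF : F = Set.univ := Set.eq_univ_of_forall hc
  rw [hF] at h
  simp only [ChaseSmall, Cardinal.mk_univ] at h
  exact lt_irrefl _ h

lemma chaseSmall_biUnion {s : Finset ℕ} {f : ℕ → Set J} (h : ∀ l, ChaseSmall J (f l)) :
    ChaseSmall J (⋃ l ∈ s, f l) := by
  classical
  induction s using Finset.induction with
  | empty => simpa using chaseSmall_of_finite Set.finite_empty
  | insert _ _ hnm ih =>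
      rw [Finset.set_biUnion_insert]
      exact chaseSmall_union (h _) ih

variable (φ : (∀ i, A i) →+ DirectSum J B)
  (Asub : ∀ i, ℕ → AddSubgroup (A i)) (Bsub : ∀ j, ℕ → AddSubgroup (B j))

/-- A subset `E ⊆ I` is *bad* if at every level `m`, avoiding any small set of
coordinates in `J`, some element of `∏ᵢ Asub i m` supported in `E` maps to something
escaping `Bsub j n` for some `n > m`. -/
def ChaseBad (E : Set I) : Prop :=
  ∀ (m : ℕ) (F : Set J), ChaseSmall J F →
    ∃ j, j ∉ F ∧ ∃ n, m < n ∧ ∃ x : ∀ i, A i,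
      (∀ i, x i ∈ Asub i m) ∧ (∀ i, i ∉ E → x i = 0) ∧ φ x j ∉ Bsub j n

/-- Explicit form of the negation of `ChaseBad`. -/
def ChaseGood (E : Set I) : Prop :=
  ∃ (m : ℕ) (F : Set J), ChaseSmall J F ∧
    ∀ j, j ∉ F → ∀ n, m < n → ∀ x : ∀ i, A i,
      (∀ i, x i ∈ Asub i m) → (∀ i, i ∉ E → x i = 0) → φ x j ∈ Bsub j n

lemma bad_not_good {E : Set I} (hb : ChaseBad φ Asub Bsub E)
    (hg : ChaseGood φ Asub Bsub E) : False := by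
  obtain ⟨m, F, hF, hgood⟩ := hg
  obtain ⟨j, hj, n, hn, x, h1, h2, h3⟩ := hb m F hF
  exact h3 (hgood j hj n hn x h1 h2)

lemma good_of_not_bad {E : Set I} (h : ¬ ChaseBad φ Asub Bsub E) :
    ChaseGood φ Asub Bsub E := by
  unfold ChaseBad at h
  push_neg at h
  exact h

lemma bad_mono {E E' : Set I} (hEE : E ⊆ E') (h : ChaseBad φ Asub Bsub E) :
    ChaseBad φ Asub Bsub E' := by
  intro m F hF
  obtain ⟨j, hj, n, hn, x, h1, h2, h3⟩ := h m F hF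
  exact ⟨j, hj, n, hn, x, h1, fun i hi => h2 i fun hm => hi (hEE hm), h3⟩

lemma good_mono {E E' : Set I} (hEE : E ⊆ E') (h : ChaseGood φ Asub Bsub E') :
    ChaseGood φ Asub Bsub E := by
  obtain ⟨m, F, hF, hg⟩ := h
  exact ⟨m, F, hF, fun j hj n hn x h1 h2 =>
    hg j hj n hn x h1 fun i hi => h2 i fun hm => hi (hEE hm)⟩

lemma good_empty : ChaseGood φ Asub Bsub (∅ : Set I) := by
  refine ⟨0, ∅, chaseSmall_of_finite Set.finite_empty, fun j hj n hn x h1 h2 => ?_⟩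
  have hx : x = 0 := funext fun i => h2 i (Set.notMem_empty i)
  rw [hx, map_zero, DirectSum.zero_apply]
  exact zero_mem _


/-- Masking an element of the product by a subset of the index set. -/
noncomputable def chaseMask (E : Set I) (x : ∀ i, A i) : ∀ i, A i :=
  fun i => if i ∈ E then x i else 0

lemma chaseMask_mem {E : Set I} {x : ∀ i, A i} {m : ℕ} (hx : ∀ i, x i ∈ Asub i m) :
    ∀ i, chaseMask E x i ∈ Asub i m := by
  intro i
  unfold chaseMask
  by_cases hi : i ∈ E
  · simpa [hi] using hx i
  · rw [if_neg hi]; exact zero_mem _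

lemma chaseMask_supp {E : Set I} (x : ∀ i, A i) : ∀ i, i ∉ E → chaseMask E x i = 0 := by
  intro i hi; simp [chaseMask, hi]

lemma good_union (hA : ∀ i, Antitone (Asub i)) {E E' : Set I}
    (h : ChaseGood φ Asub Bsub E) (h' : ChaseGood φ Asub Bsub E') :
    ChaseGood φ Asub Bsub (E ∪ E') := by
  obtain ⟨m, F, hF, hg⟩ := h
  obtain ⟨m', F', hF', hg'⟩ := h'
  refine ⟨max m m', F ∪ F', chaseSmall_union hF hF', fun j hj n hn x h1 h2 => ?_⟩
  set x1 : ∀ i, A i := chaseMask E x with hx1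
  set x2 : ∀ i, A i := x - x1 with hx2
  have hmem1 : ∀ i, x1 i ∈ Asub i m :=
    chaseMask_mem Asub (fun i => hA i (le_max_left m m') (h1 i))
  have hmemx' : ∀ i, x i ∈ Asub i m' := fun i => hA i (le_max_right m m') (h1 i)
  have hmem2 : ∀ i, x2 i ∈ Asub i m' := fun i =>
    sub_mem (hmemx' i) (chaseMask_mem Asub hmemx' i)
  have hsupp2 : ∀ i, i ∉ E' → x2 i = 0 := by
    intro i hi
    by_cases hiE : i ∈ E
    · simp [hx2, hx1, chaseMask, hiE]
    · have : x i = 0 := h2 i (by simp [hiE, hi])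
      simp [hx2, hx1, chaseMask, hiE, this]
  have hx : x = x1 + x2 := by
    funext i
    simp [hx2]
  have hjF : j ∉ F := fun h => hj (Or.inl h)
  have hjF' : j ∉ F' := fun h => hj (Or.inr h)
  have e1 : φ x1 j ∈ Bsub j n :=
    hg j hjF n (lt_of_le_of_lt (le_max_left m m') hn) x1 hmem1 (chaseMask_supp x)
  have e2 : φ x2 j ∈ Bsub j n :=
    hg' j hjF' n (lt_of_le_of_lt (le_max_right m m') hn) x2 hmem2 hsupp2
  rw [hx, map_add, DirectSum.add_apply]
  exact add_mem e1 e2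

lemma good_singleton (hcard : ∀ i, Cardinal.mk (A i) < Cardinal.mk J) (i0 : I) :
    ChaseGood φ Asub Bsub ({i0} : Set I) := by
  set W : Set J := ⋃ a : A i0, ↑(DFinsupp.support (φ (Pi.single i0 a))) with hW
  have hWsmall : ChaseSmall J W := by
    rcases finite_or_infinite (A i0) with hfin | hinf
    · exact chaseSmall_of_finite
        (Set.finite_iUnion fun a => (DFinsupp.support (φ (Pi.single i0 a))).finite_toSet)
    · have h1 : Cardinal.mk W ≤ Cardinal.mk (A i0) * Cardinal.aleph0 := by
        refine le_trans (Cardinal.mk_iUnion_le _) (mul_le_mul' le_rfl ?_)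
        exact ciSup_le' fun a =>
          le_of_lt ((DFinsupp.support (φ (Pi.single i0 a))).finite_toSet.lt_aleph0)
      have hAinf : Cardinal.aleph0 ≤ Cardinal.mk (A i0) := Cardinal.infinite_iff.mp hinf
      calc Cardinal.mk W ≤ Cardinal.mk (A i0) * Cardinal.aleph0 := h1
        _ = Cardinal.mk (A i0) := by
            rw [Cardinal.mul_eq_max hAinf le_rfl, max_eq_left hAinf]
        _ < Cardinal.mk J := hcard i0
  refine ⟨0, W, hWsmall, fun j hj n hn x h1 h2 => ?_⟩
  have hx : x = Pi.single i0 (x i0) := by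
    funext i
    by_cases hi : i = i0
    · subst hi; simp
    · rw [h2 i (by simp [hi]), Pi.single_eq_of_ne hi]
  have h0 : φ x j = 0 := by
    rw [hx]
    by_contra hne
    exact hj (hW ▸ Set.mem_iUnion.mpr ⟨x i0, by simpa using DFinsupp.mem_support_iff.mpr hne⟩)
  rw [h0]; exact zero_mem _

lemma bad_univ (hB : ∀ j, Antitone (Bsub j))
    (hressurj : ∀ (k : ℕ) (b : DirectSum J B), (∀ j, b j ∈ Bsub j k) →
      ∃ x : ∀ i, A i, (∀ i, x i ∈ Asub i k) ∧ φ x = b)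
    (hfin : ∀ n, ({j | ∀ m ≥ n, Bsub j m = Bsub j n} : Set J).Finite) :
    ChaseBad φ Asub Bsub (Set.univ : Set I) := by
  intro m F hF
  obtain ⟨j, hj⟩ :=
    chaseSmall_exists_not_mem (chaseSmall_union hF (chaseSmall_of_finite (hfin m)))
  have hjF : j ∉ F := fun h => hj (Or.inl h)
  have hjS : ¬ ∀ m' ≥ m, Bsub j m' = Bsub j m := fun h => hj (Or.inr h)
  push_neg at hjS
  obtain ⟨n, hnm, hne⟩ := hjS
  have hlt : Bsub j n < Bsub j m := lt_of_le_of_ne (hB j hnm) hne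
  obtain ⟨b, hbm, hbn⟩ := SetLike.exists_of_lt hlt
  have hmem : ∀ j', (DirectSum.of B j b) j' ∈ Bsub j' m := by
    intro j'
    by_cases h : j = j'
    · subst h; rw [DirectSum.of_eq_same]; exact hbm
    · rw [DirectSum.of_eq_of_ne _ _ _ (Ne.symm h)]; exact zero_mem _
  obtain ⟨x, hx1, hx2⟩ := hressurj m (DirectSum.of B j b) hmem
  have hmn : m < n := by
    rcases lt_or_eq_of_le hnm with h | h
    · exact h
    · exact absurd (by rw [h]) hne
  refine ⟨j, hjF, n, hmn, x, hx1, fun i hi => absurd (Set.mem_univ i) hi, ?_⟩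
  rw [hx2, DirectSum.of_eq_same]
  exact hbn


lemma unified_crux (hA : ∀ i, Antitone (Asub i))
    (hφ : ∀ (k : ℕ) (x : ∀ i, A i), (∀ i, x i ∈ Asub i k) → ∀ j, φ x j ∈ Bsub j k)
    (T : ℕ → Set I) (hpf : ∀ i, ({k | i ∈ T k} : Set ℕ).Finite)
    (H : ∀ (k m : ℕ) (F : Set J), ChaseSmall J F →
      ∃ j, j ∉ F ∧ ∃ n, m < n ∧ ∃ x : ∀ i, A i,
        (∀ i, x i ∈ Asub i m) ∧ (∀ i, i ∉ T k → x i = 0) ∧ φ x j ∉ Bsub j n) : False := by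
  have hJ : Nonempty J := inferInstance
  have H' : ∀ (k m : ℕ) (F : Set J), ∃ w : J × ℕ × (∀ i, A i), ChaseSmall J F →
      (w.1 ∉ F ∧ m < w.2.1 ∧ (∀ i, w.2.2 i ∈ Asub i m) ∧
        (∀ i, i ∉ T k → w.2.2 i = 0) ∧ φ w.2.2 w.1 ∉ Bsub w.1 w.2.1) := by
    intro k m F
    by_cases hF : ChaseSmall J F
    · obtain ⟨j, hj, n, hn, x, h1, h2, h3⟩ := H k m F hF
      exact ⟨⟨j, n, x⟩, fun _ => ⟨hj, hn, h1, h2, h3⟩⟩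
    · exact ⟨⟨Classical.arbitrary J, 0, 0⟩, fun h => absurd h hF⟩
  choose w hw using H'
  let st : ℕ → ℕ × Set J := fun k => Nat.rec (0, (∅ : Set J))
    (fun k ih => ((w k ih.1 ih.2).2.1,
      ih.2 ∪ ({(w k ih.1 ih.2).1} ∪ ↑(DFinsupp.support (φ (w k ih.1 ih.2).2.2))))) k
  let m_ : ℕ → ℕ := fun k => (st k).1
  let F_ : ℕ → Set J := fun k => (st k).2
  let j_ : ℕ → J := fun k => (w k (m_ k) (F_ k)).1
  let n_ : ℕ → ℕ := fun k => (w k (m_ k) (F_ k)).2.1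
  let x_ : ℕ → ∀ i, A i := fun k => (w k (m_ k) (F_ k)).2.2
  have hm_succ : ∀ k, m_ (k+1) = n_ k := fun k => rfl
  have hF_succ : ∀ k, F_ (k+1) = F_ k ∪ ({j_ k} ∪ ↑(DFinsupp.support (φ (x_ k)))) :=
    fun k => rfl
  have hFsmall : ∀ k, ChaseSmall J (F_ k) := by
    intro k
    induction k with
    | zero => exact chaseSmall_of_finite Set.finite_empty
    | succ k ih =>
        rw [hF_succ]
        exact chaseSmall_union ih (chaseSmall_of_finite
          ((Set.finite_singleton _).union (Finset.finite_toSet _)))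
  have props : ∀ k, j_ k ∉ F_ k ∧ m_ k < n_ k ∧ (∀ i, x_ k i ∈ Asub i (m_ k)) ∧
      (∀ i, i ∉ T k → x_ k i = 0) ∧ φ (x_ k) (j_ k) ∉ Bsub (j_ k) (n_ k) :=
    fun k => hw k (m_ k) (F_ k) (hFsmall k)
  have hmmono : StrictMono m_ := strictMono_nat_of_lt_succ fun k => by
    rw [hm_succ]; exact (props k).2.1
  have hFmono : Monotone F_ := monotone_nat_of_le_succ fun k => by
    rw [hF_succ]; exact Set.subset_union_left
  have hjmemF : ∀ k l, k < l → j_ k ∈ F_ l := by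
    intro k l hkl
    apply hFmono hkl
    rw [hF_succ]
    exact Set.mem_union_right _ (Set.mem_union_left _ rfl)
  have heval0 : ∀ k l, k < l → φ (x_ k) (j_ l) = 0 := by
    intro k l hkl
    by_contra h0
    have hmem : j_ l ∈ F_ l := by
      apply hFmono hkl
      rw [hF_succ]
      exact Set.mem_union_right _
        (Set.mem_union_right _ (by simpa using DFinsupp.mem_support_iff.mpr h0))
    exact (props l).1 hmem
  have hjinj : Function.Injective j_ := by
    intro a b hab
    rcases lt_trichotomy a b with h | h | h
    · exact absurd (hab ▸ hjmemF a b h) (props b).1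
    · exact h
    · exact absurd (hab ▸ hjmemF b a h) (props a).1
  let Ki : I → Finset ℕ := fun i => (hpf i).toFinset
  have hxzero : ∀ (k : ℕ) (i : I), k ∉ Ki i → x_ k i = 0 := by
    intro k i hk
    refine (props k).2.2.2.1 i fun hT => hk ?_
    simpa [Ki] using hT
  let y : ∀ i, A i := fun i => ∑ k ∈ Ki i, x_ k i
  have htail : ∀ (M : ℕ) (i : I), y i - ∑ k ∈ Finset.range M, x_ k i ∈ Asub i (m_ M) := by
    intro M i
    have h1 : y i = ∑ k ∈ Ki i ∪ Finset.range M, x_ k i :=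
      Finset.sum_subset Finset.subset_union_left (fun k _ hnk => hxzero k i hnk)
    have h2 : ∑ k ∈ Finset.range M, x_ k i =
        ∑ k ∈ (Ki i ∪ Finset.range M).filter (fun k => k < M), x_ k i := by
      congr 1
      ext k
      simp only [Finset.mem_filter, Finset.mem_union, Finset.mem_range]
      tauto
    rw [h1, h2, ← Finset.sum_filter_add_sum_filter_not (Ki i ∪ Finset.range M)
      (fun k => k < M), add_sub_cancel_left]
    apply AddSubgroup.sum_mem
    intro k hk
    have hkM : M ≤ k := le_of_not_gt (Finset.mem_filter.mp hk).2
    exact hA i (hmmono.monotone hkM) ((props k).2.2.1 i)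
  have hphiy : ∀ l, φ y (j_ l) ∉ Bsub (j_ l) (n_ l) := by
    intro l hmem
    have hy : y = (∑ k ∈ Finset.range (l+1), x_ k) +
        (y - ∑ k ∈ Finset.range (l+1), x_ k) := by
      rw [add_comm, sub_add_cancel]
    have hr : φ (y - ∑ k ∈ Finset.range (l+1), x_ k) (j_ l) ∈ Bsub (j_ l) (n_ l) := by
      have hmem' := hφ (m_ (l+1)) (y - ∑ k ∈ Finset.range (l+1), x_ k)
        (fun i => by simpa using htail (l+1) i) (j_ l)
      rwa [hm_succ] at hmem'
    have hsum : φ (∑ k ∈ Finset.range (l+1), x_ k) (j_ l) = φ (x_ l) (j_ l) := by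
      rw [map_sum, DFinsupp.finset_sum_apply, Finset.sum_range_succ,
        Finset.sum_eq_zero (fun k hk => heval0 k l (Finset.mem_range.mp hk)), zero_add]
    have hxl : φ (x_ l) (j_ l) ∈ Bsub (j_ l) (n_ l) := by
      have hsplit : φ y (j_ l) = φ (x_ l) (j_ l) +
          φ (y - ∑ k ∈ Finset.range (l+1), x_ k) (j_ l) := by
        conv_lhs => rw [hy]
        rw [map_add, DirectSum.add_apply, hsum]
      rw [hsplit] at hmem
      simpa using sub_mem hmem hr
    exact (props l).2.2.2.2 hxl
  have hrange : Set.range j_ ⊆ ↑(DFinsupp.support (φ y)) := by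
    rintro _ ⟨l, rfl⟩
    simp only [Finset.mem_coe]
    exact DFinsupp.mem_support_iff.mpr fun h0 => hphiy l (by rw [h0]; exact zero_mem _)
  exact Set.infinite_range_of_injective hjinj
    (Set.Finite.subset (Finset.finite_toSet _) hrange)


lemma crux_disjoint_bad (hA : ∀ i, Antitone (Asub i))
    (hφ : ∀ (k : ℕ) (x : ∀ i, A i), (∀ i, x i ∈ Asub i k) → ∀ j, φ x j ∈ Bsub j k)
    (D : ℕ → Set I) (hdisj : Pairwise (Function.onFun Disjoint D))
    (hbad : ∀ k, ChaseBad φ Asub Bsub (D k)) : False := by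
  apply unified_crux φ Asub Bsub hA hφ D ?_ (fun k m F hF => hbad k m F hF)
  intro i
  apply Set.Subsingleton.finite
  intro a ha b hb
  by_contra hab
  exact Set.disjoint_left.mp (hdisj hab) ha hb

lemma crux_sigma (hA : ∀ i, Antitone (Asub i))
    (hφ : ∀ (k : ℕ) (x : ∀ i, A i), (∀ i, x i ∈ Asub i k) → ∀ j, φ x j ∈ Bsub j k)
    (g : ℕ → Set I) (hgood : ∀ n, ChaseGood φ Asub Bsub (g n))
    (hbad : ChaseBad φ Asub Bsub (⋃ n, g n)) : False := by
  classical
  set C : ℕ → Set I := disjointed g with hC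
  have hCsub : ∀ n, C n ⊆ g n := fun n => disjointed_le g n
  have hCdisj : Pairwise (Function.onFun Disjoint C) := disjoint_disjointed g
  have hCunion : (⋃ n, C n) = ⋃ n, g n := iSup_disjointed g
  have hCgood : ∀ n, ChaseGood φ Asub Bsub (C n) := fun n =>
    good_mono φ Asub Bsub (hCsub n) (hgood n)
  choose mf Ff hFfsmall hgoodf using hCgood
  set U : Set I := ⋃ n, g n with hU
  set T : ℕ → Set I := fun k => U \ ⋃ l ∈ Finset.range k, C l with hT
  apply unified_crux φ Asub Bsub hA hφ T ?_ ?_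
  · intro i
    by_cases hiU : i ∈ U
    · have hiC : i ∈ ⋃ n, C n := hCunion ▸ hiU
      obtain ⟨l0, hl0⟩ := Set.mem_iUnion.mp hiC
      apply Set.Finite.subset (Set.finite_Iic l0)
      intro k hk
      have hkT : i ∈ T k := hk
      by_contra hkl
      exact hkT.2 (Set.mem_iUnion₂.mpr ⟨l0, Finset.mem_range.mpr (lt_of_not_ge hkl), hl0⟩)
    · apply Set.Finite.subset Set.finite_empty
      intro k hk
      exact absurd (Set.mem_setOf_eq ▸ hk : i ∈ T k).1 hiU
  · intro k m F hF
    set M : ℕ := max m ((Finset.range k).sup mf) with hM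
    set F' : Set J := F ∪ ⋃ l ∈ Finset.range k, Ff l with hF'
    have hF'small : ChaseSmall J F' := chaseSmall_union hF (chaseSmall_biUnion hFfsmall)
    obtain ⟨j, hj, n, hn, x, h1, h2, h3⟩ := hbad M F' hF'small
    refine ⟨j, fun hjF => hj (Or.inl hjF), n, lt_of_le_of_lt (le_max_left _ _) hn, ?_⟩
    set xh : ∀ i, A i := chaseMask (T k) x with hxh
    have hdecomp : x = xh + ∑ l ∈ Finset.range k, chaseMask (C l) x := by
      funext i
      simp only [Pi.add_apply, Finset.sum_apply]
      by_cases hiU : i ∈ U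
      · by_cases hib : i ∈ ⋃ l ∈ Finset.range k, C l
        · obtain ⟨l0, hl0r, hl0⟩ := Set.mem_iUnion₂.mp hib
          have hxh0 : xh i = 0 := by
            have hiT : i ∉ T k := fun hT' => hT'.2 (Set.mem_iUnion₂.mpr ⟨l0, hl0r, hl0⟩)
            simp [hxh, chaseMask, hiT]
          rw [hxh0, zero_add, Finset.sum_eq_single l0]
          · simp [chaseMask, hl0]
          · intro b hb hne
            have hnotin : i ∉ C b := fun hmem =>
              Set.disjoint_left.mp (hCdisj hne) hmem hl0
            simp [chaseMask, hnotin]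
          · intro hl0r'
            exact absurd hl0r hl0r'
        · have hiT : i ∈ T k := ⟨hiU, hib⟩
          have hxh1 : xh i = x i := by simp [hxh, chaseMask, hiT]
          rw [hxh1, Finset.sum_eq_zero, add_zero]
          intro l hl
          have hnotin : i ∉ C l := fun hmem =>
            hib (Set.mem_iUnion₂.mpr ⟨l, hl, hmem⟩)
          simp [chaseMask, hnotin]
      · have hx0 : x i = 0 := h2 i hiU
        have hxh0 : xh i = 0 := by
          have hiT : i ∉ T k := fun hT' => hiU hT'.1
          simp [hxh, chaseMask, hiT]
        rw [hx0, hxh0, zero_add, Finset.sum_eq_zero]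
        intro l _
        simp [chaseMask, hx0]
    refine ⟨xh, ?_, ?_, ?_⟩
    · exact chaseMask_mem Asub (fun i => hA i (le_max_left _ _) (h1 i))
    · exact chaseMask_supp x
    · intro hmem
      apply h3
      have hx : φ x j = φ xh j + ∑ l ∈ Finset.range k, φ (chaseMask (C l) x) j := by
        conv_lhs => rw [hdecomp]
        rw [map_add, DirectSum.add_apply, map_sum, DFinsupp.finset_sum_apply]
      rw [hx]
      apply add_mem hmem
      apply AddSubgroup.sum_mem
      intro l hl
      have hjFf : j ∉ Ff l := fun hjf => hj (Or.inr (Set.mem_iUnion₂.mpr ⟨l, hl, hjf⟩))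
      have hmfl : mf l ≤ M := le_trans (Finset.le_sup hl) (le_max_right _ _)
      exact hgoodf l j hjFf n (lt_of_le_of_lt hmfl hn) (chaseMask (C l) x)
        (chaseMask_mem Asub (fun i => hA i hmfl (h1 i))) (chaseMask_supp x)

end Chase

/-- For a Chase system with `I` non-`ω`-measurable, `J` infinite with `|A i| < |J|` for all
`i`, `φ` surjective and all restrictions `∏ᵢ Asub i k → ⨁ⱼ Bsub j k` surjective, there are
`n₀ : ℕ` and an infinite `L ⊆ J` such that `Bsub j n = Bsub j n₀` for all `j ∈ L`, `n ≥ n₀`. -/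
theorem chase_descending_chain {I : Type u} {J : Type u} (hI : ¬ IsOmegaMeasurable I)
    [Infinite J] (A : I → Type u) (B : J → Type u)
    [∀ i, AddCommGroup (A i)] [∀ j, AddCommGroup (B j)]
    (hcard : ∀ i, Cardinal.mk (A i) < Cardinal.mk J)
    (φ : (∀ i, A i) →+ DirectSum J B)
    (Asub : ∀ i, ℕ → AddSubgroup (A i)) (Bsub : ∀ j, ℕ → AddSubgroup (B j))
    (hA : ∀ i, Antitone (Asub i)) (hB : ∀ j, Antitone (Bsub j))
    (hφ : ∀ (k : ℕ) (x : ∀ i, A i), (∀ i, x i ∈ Asub i k) → ∀ j, φ x j ∈ Bsub j k)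
    (hsurj : Function.Surjective φ)
    (hressurj : ∀ (k : ℕ) (b : DirectSum J B), (∀ j, b j ∈ Bsub j k) →
      ∃ x : ∀ i, A i, (∀ i, x i ∈ Asub i k) ∧ φ x = b) :
    ∃ (n₀ : ℕ) (L : Set J), L.Infinite ∧ ∀ j ∈ L, ∀ n ≥ n₀, Bsub j n = Bsub j n₀ := by
  classical
  by_contra hcon
  push_neg at hcon
  have hfin : ∀ n, ({j | ∀ m ≥ n, Bsub j m = Bsub j n} : Set J).Finite := by
    intro n
    by_contra hinf
    obtain ⟨j, hjS, n', hn', hne⟩ := hcon n _ hinf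
    exact hne (hjS n' hn')
  have hbadU : ChaseBad φ Asub Bsub (Set.univ : Set I) :=
    bad_univ φ Asub Bsub hB hressurj hfin
  by_cases hcnt : Countable I
  · by_cases hne : Nonempty I
    · obtain ⟨f, hf⟩ := exists_surjective_nat I
      apply crux_sigma φ Asub Bsub hA hφ (fun n => ({f n} : Set I))
        (fun n => good_singleton φ Asub Bsub hcard (f n))
      have huniv : (⋃ n, ({f n} : Set I)) = Set.univ := by
        apply Set.eq_univ_of_forall
        intro i
        obtain ⟨n, rfl⟩ := hf i
        exact Set.mem_iUnion.mpr ⟨n, rfl⟩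
      rw [huniv]
      exact hbadU
    · have huniv : (Set.univ : Set I) = ∅ := Set.univ_eq_empty_iff.mpr (not_nonempty_iff.mp hne)
      rw [huniv] at hbadU
      exact bad_not_good φ Asub Bsub hbadU (good_empty φ Asub Bsub)
  · by_cases hsplit : ∀ R : Set I, ChaseBad φ Asub Bsub R →
        ∃ E, E ⊆ R ∧ ChaseBad φ Asub Bsub E ∧ ChaseBad φ Asub Bsub (R \ E)
    · have hsp' : ∀ R : Set I, ∃ E, ChaseBad φ Asub Bsub R →
          (E ⊆ R ∧ ChaseBad φ Asub Bsub E ∧ ChaseBad φ Asub Bsub (R \ E)) := by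
        intro R
        by_cases h : ChaseBad φ Asub Bsub R
        · obtain ⟨E, hE⟩ := hsplit R h
          exact ⟨E, fun _ => hE⟩
        · exact ⟨∅, fun hh => absurd hh h⟩
      choose sp hsp using hsp'
      let r : ℕ → Set I := fun k => Nat.rec Set.univ (fun _ ih => ih \ sp ih) k
      have hr_succ : ∀ k, r (k+1) = r k \ sp (r k) := fun k => rfl
      have hrbad : ∀ k, ChaseBad φ Asub Bsub (r k) := by
        intro k
        induction k with
        | zero => exact hbadU
        | succ k ih => rw [hr_succ]; exact (hsp (r k) ih).2.2
      have hrmono : Antitone r := antitone_nat_of_succ_le fun k => by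
        rw [hr_succ]; exact Set.diff_subset
      have hkey : ∀ a b, a < b → Disjoint (sp (r a)) (sp (r b)) := by
        intro a b hab
        have h1 : sp (r b) ⊆ r (a+1) :=
          Set.Subset.trans (hsp (r b) (hrbad b)).1 (hrmono hab)
        rw [hr_succ] at h1
        exact Set.disjoint_left.mpr fun i hia hib => (h1 hib).2 hia
      apply crux_disjoint_bad φ Asub Bsub hA hφ (fun k => sp (r k)) ?_
        (fun k => (hsp (r k) (hrbad k)).2.1)
      intro a b hab
      rcases lt_or_gt_of_ne hab with h | h
      · exact hkey a b h
      · exact (hkey b a h).symm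
    · push_neg at hsplit
      obtain ⟨R, hRbad, hRuns⟩ := hsplit
      have d2 : ∀ E, E ⊆ R → ChaseBad φ Asub Bsub E → ChaseGood φ Asub Bsub (R \ E) :=
        fun E hER hE => good_of_not_bad φ Asub Bsub (hRuns E hER hE)
      have d1 : ∀ E, E ⊆ R → ChaseBad φ Asub Bsub (R \ E) ∨ ChaseBad φ Asub Bsub E := by
        intro E hER
        by_cases h1 : ChaseBad φ Asub Bsub E
        · exact Or.inr h1
        · left
          by_contra h2
          apply bad_not_good φ Asub Bsub hRbad
          have := good_union φ Asub Bsub hA (good_of_not_bad φ Asub Bsub h1)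
            (good_of_not_bad φ Asub Bsub h2)
          rwa [Set.union_diff_cancel hER] at this
      let Fl : Filter I :=
        { sets := {E | ChaseBad φ Asub Bsub (E ∩ R)}
          univ_sets := by simpa [Set.univ_inter] using hRbad
          sets_of_superset := by
            intro E E' hE hEE'
            rcases d1 (E' ∩ R) Set.inter_subset_right with h | h
            · exfalso
              have hsub : R \ (E' ∩ R) ⊆ R \ (E ∩ R) :=
                Set.diff_subset_diff_right (Set.inter_subset_inter_left R hEE')
              exact bad_not_good φ Asub Bsub (bad_mono φ Asub Bsub hsub h)
                (d2 (E ∩ R) Set.inter_subset_right hE)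
            · exact h
          inter_sets := by
            intro E E' hE hE'
            rcases d1 (E ∩ E' ∩ R) Set.inter_subset_right with h | h
            · exfalso
              have hsub : R \ (E ∩ E' ∩ R) ⊆ (R \ (E ∩ R)) ∪ (R \ (E' ∩ R)) := by
                intro i hi
                by_cases hiE : i ∈ E
                · exact Or.inr ⟨hi.1, fun hm => hi.2 ⟨⟨hiE, hm.1⟩, hm.2⟩⟩
                · exact Or.inl ⟨hi.1, fun hm => hiE hm.1⟩
              exact bad_not_good φ Asub Bsub (bad_mono φ Asub Bsub hsub h)
                (good_union φ Asub Bsub hA (d2 (E ∩ R) Set.inter_subset_right hE)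
                  (d2 (E' ∩ R) Set.inter_subset_right hE'))
            · exact h }
      have hmemFl : ∀ E : Set I, E ∈ Fl ↔ ChaseBad φ Asub Bsub (E ∩ R) := fun E => Iff.rfl
      have hidc : ∀ s : Set I, R \ (s ∩ R) = sᶜ ∩ R := by
        intro s
        ext i
        simp only [Set.mem_diff, Set.mem_inter_iff, Set.mem_compl_iff]
        tauto
      let U : Ultrafilter I := Ultrafilter.ofComplNotMemIff Fl (by
        intro s
        constructor
        · intro hns
          rcases d1 (s ∩ R) Set.inter_subset_right with h | h
          · exfalso
            apply hns
            rw [hmemFl]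
            rwa [hidc s] at h
          · exact h
        · intro hs hns
          rw [hmemFl] at hs hns
          rw [← hidc s] at hns
          exact bad_not_good φ Asub Bsub hns (d2 (s ∩ R) Set.inter_subset_right hs))
      have hUmem : ∀ E : Set I, E ∈ U ↔ ChaseBad φ Asub Bsub (E ∩ R) := fun E => Iff.rfl
      apply hI
      refine ⟨hcnt, U, ?_, ?_⟩
      · intro x hx
        rw [hUmem] at hx
        exact bad_not_good φ Asub Bsub hx
          (good_mono φ Asub Bsub Set.inter_subset_left (good_singleton φ Asub Bsub hcard x))
      · intro s hs
        rw [hUmem]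
        rcases d1 ((⋂ n, s n) ∩ R) Set.inter_subset_right with h | h
        · exfalso
          have hid : R \ ((⋂ n, s n) ∩ R) = ⋃ n, (R \ (s n ∩ R)) := by
            ext i
            constructor
            · rintro ⟨hiR, hni⟩
              have : ¬ ∀ n, i ∈ s n := fun hall =>
                hni ⟨Set.mem_iInter.mpr hall, hiR⟩
              obtain ⟨n, hn⟩ := not_forall.mp this
              exact Set.mem_iUnion.mpr ⟨n, hiR, fun hm => hn hm.1⟩
            · intro hi
              obtain ⟨n, hiR, hns⟩ := Set.mem_iUnion.mp hi
              exact ⟨hiR, fun hm => hns ⟨Set.mem_iInter.mp hm.1 n, hiR⟩⟩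
          rw [hid] at h
          exact crux_sigma φ Asub Bsub hA hφ _
            (fun n => d2 (s n ∩ R) Set.inter_subset_right ((hUmem (s n)).mp (hs n))) h
        · exact h
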